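/- For every countable ordinal ξ there exists a choice of γ-approximating sequences (α(γ,n))_{n=1}^∞ for all limit ordinals γ ≤ ξ (each consisting of successor ordinals in [1,γ) strictly increasing to γ) such that the resulting Schreier families satisfy, for every limit ordinal γ ≤ ξ: α(γ,1) = 1, and for all n ∈ ℕ, whenever A, B ∈ S_{α(γ,n)} with 1 < A < B, then A ∪ B ∈ S_{α(γ,n+1)}. -/

import Mathlib

noncomputable section

open scoped Classical

/-- The first uncountable ordinal. -/
def omegaOne : Ordinal := (Cardinal.aleph 1).ord

/-- `A < B` for finite sets of naturals: every element of `A` is smaller than every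
element of `B` (i.e. `max A < min B`, with the conventions `∅ < B` and `A < ∅`). -/
def finLT (A B : Finset ℕ) : Prop := ∀ a ∈ A, ∀ b ∈ B, a < b

/-- `n ≤ A`, i.e. `n ≤ min A` (with `min ∅ = ∞`). -/
def finLE (n : ℕ) (A : Finset ℕ) : Prop := ∀ a ∈ A, n ≤ a

/-- The successor step in the definition of the Schreier families:
unions `E_1 ∪ ⋯ ∪ E_n` with `n ≤ E_1 < E_2 < ⋯ < E_n` and each `E_i` a nonempty member
of `F` (the empty set arises from `n = 0`). -/
def succStep (F : Set (Finset ℕ)) : Set (Finset ℕ) :=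
  {A | ∃ (n : ℕ) (E : Fin n → Finset ℕ),
        (∀ i, E i ∈ F) ∧ (∀ i, (E i).Nonempty) ∧
        (∀ i j : Fin n, i < j → finLT (E i) (E j)) ∧
        (∀ i, finLE n (E i)) ∧ A = Finset.univ.biUnion E}

/-- The data of Schreier families `S γ` for `γ ≤ ξ`, built from a choice of
`γ`-approximating sequences `α γ ·` (indexed by `n ≥ 1`) for the limit ordinals
`γ ≤ ξ`: each `α γ n` is a successor ordinal in `[1, γ)` and the sequence strictly
increases to `γ`. -/
structure PartialSchreier (ξ : Ordinal) where
  α : Ordinal → ℕ → Ordinal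
  S : Ordinal → Set (Finset ℕ)
  S_zero : S 0 = {A : Finset ℕ | A = ∅ ∨ ∃ n : ℕ, A = {n}}
  S_succ : ∀ γ : Ordinal, γ + 1 ≤ ξ → S (γ + 1) = succStep (S γ)
  S_limit : ∀ γ : Ordinal, Order.IsSuccLimit γ → γ ≤ ξ →
    S γ = {E : Finset ℕ | ∃ n : ℕ, 1 ≤ n ∧ finLE n E ∧ E ∈ S (α γ n)}
  α_pos : ∀ γ : Ordinal, Order.IsSuccLimit γ → γ ≤ ξ → ∀ n : ℕ, 1 ≤ n → 1 ≤ α γ n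
  α_lt : ∀ γ : Ordinal, Order.IsSuccLimit γ → γ ≤ ξ → ∀ n : ℕ, 1 ≤ n → α γ n < γ
  α_succOrd : ∀ γ : Ordinal, Order.IsSuccLimit γ → γ ≤ ξ → ∀ n : ℕ, 1 ≤ n →
    ∃ β : Ordinal, α γ n = β + 1
  α_mono : ∀ γ : Ordinal, Order.IsSuccLimit γ → γ ≤ ξ → ∀ n : ℕ, 1 ≤ n → α γ n < α γ (n + 1)
  α_tendsto : ∀ γ : Ordinal, Order.IsSuccLimit γ → γ ≤ ξ → ∀ β : Ordinal, β < γ →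
    ∃ n : ℕ, 1 ≤ n ∧ β < α γ n

/-- For every countable ordinal `ξ` there exists a choice of
`γ`-approximating sequences for all limit ordinals `γ ≤ ξ` such that the resulting
Schreier families satisfy, for every limit `γ ≤ ξ`:  `α γ 1 = 1`, and whenever
`A, B ∈ S (α γ n)` with `1 < A < B`, then `A ∪ B ∈ S (α γ (n+1))`. -/
def SchBase : Set (Finset ℕ) := {A | A = ∅ ∨ ∃ n : ℕ, A = {n}}

def GoodSeq (γ : Ordinal) (T : Ordinal → Set (Finset ℕ)) (d : ℕ → Ordinal) : Prop :=
  d 1 = 1 ∧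
  (∀ j : ℕ, 1 ≤ j → ∃ σ : Ordinal, d j = σ + 1) ∧
  (∀ j : ℕ, 1 ≤ j → d j < γ) ∧
  (∀ j : ℕ, 1 ≤ j → d j < d (j + 1)) ∧
  (∀ β : Ordinal, β < γ → ∃ j : ℕ, 1 ≤ j ∧ β < d j) ∧
  (∀ j : ℕ, 1 ≤ j → ∀ A : Finset ℕ, A ∈ T (d j + 1) → finLE 1 A → A ∈ T (d (j + 1)))

def SchS : Ordinal → Set (Finset ℕ) := fun γ =>
  Ordinal.limitRecOn γ SchBase (fun _ Sδ => succStep Sδ)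
    (fun γ _ f =>
      {E : Finset ℕ | ∃ n : ℕ, 1 ≤ n ∧ finLE n E ∧
        E ∈ (fun β => if h : β < γ then f β h else (∅ : Set (Finset ℕ)))
          (Classical.epsilon
            (GoodSeq γ (fun β => if h : β < γ then f β h else (∅ : Set (Finset ℕ)))) n)})

def SchT (γ : Ordinal) : Ordinal → Set (Finset ℕ) :=
  fun β => if h : β < γ then SchS β else (∅ : Set (Finset ℕ))

def SchA (γ : Ordinal) : ℕ → Ordinal :=
  if Order.IsSuccLimit γ then Classical.epsilon (GoodSeq γ (SchT γ)) else fun _ => 1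

theorem SchS_zero : SchS 0 = SchBase := Ordinal.limitRecOn_zero _ _ _

theorem SchS_succ (γ : Ordinal) : SchS (γ + 1) = succStep (SchS γ) := by
  rw [SchS, Ordinal.add_one_eq_succ, Ordinal.limitRecOn_succ]
  rfl

theorem SchS_limit {γ : Ordinal} (h : Order.IsSuccLimit γ) :
    SchS γ = {E : Finset ℕ | ∃ n : ℕ, 1 ≤ n ∧ finLE n E ∧ E ∈ SchT γ (SchA γ n)} := by
  rw [SchS, Ordinal.limitRecOn_limit _ _ _ _ h, SchA, if_pos h]
  rfl

/-! ### Basic succStep lemmas -/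

theorem empty_mem_succStep (F : Set (Finset ℕ)) : (∅ : Finset ℕ) ∈ succStep F := by
  refine ⟨0, Fin.elim0, ?_, ?_, ?_, ?_, ?_⟩ <;> first
    | exact fun i => i.elim0
    | exact fun i j _ => i.elim0
    | simp

theorem self_mem_succStep {F : Set (Finset ℕ)} {X : Finset ℕ} (hX : X ∈ F) (h1 : finLE 1 X) :
    X ∈ succStep F := by
  rcases X.eq_empty_or_nonempty with rfl | hne
  · exact empty_mem_succStep F
  · refine ⟨1, fun _ => X, fun _ => hX, fun _ => hne, ?_, fun _ => h1, ?_⟩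
    · intro i j hij
      exact absurd hij (by omega)
    · simp

theorem pair_mem_succStep {F : Set (Finset ℕ)} {X Y : Finset ℕ} (hX : X ∈ F) (hY : Y ∈ F)
    (hXne : X.Nonempty) (hYne : Y.Nonempty) (hX2 : finLE 2 X) (hY2 : finLE 2 Y)
    (hlt : finLT X Y) : X ∪ Y ∈ succStep F := by
  refine ⟨2, ![X, Y], ?_, ?_, ?_, ?_, ?_⟩
  · intro i; fin_cases i <;> simpa
  · intro i; fin_cases i <;> simpa
  · intro i j hij; fin_cases i <;> fin_cases j <;> simp_all [finLT]
  · intro i; fin_cases i <;> simpa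
  · ext x; simp [Fin.exists_fin_two]

theorem min1_of_mem_succStep {F : Set (Finset ℕ)} {A : Finset ℕ} (hA : A ∈ succStep F) :
    finLE 1 A := by
  obtain ⟨n, E, _, _, _, hle, rfl⟩ := hA
  intro a ha
  obtain ⟨i, _, hai⟩ := Finset.mem_biUnion.1 ha
  have := hle i a hai
  have := i.pos
  omega

/-! ### Good-hypothesis bundle -/

def HG (γ : Ordinal) : Prop := ∀ β : Ordinal, β ≤ γ → Order.IsSuccLimit β → GoodSeq β (SchT β) (SchA β)

theorem HG.mono {β γ : Ordinal} (h : β ≤ γ) (hγ : HG γ) : HG β :=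
  fun δ hδ hlim => hγ δ (hδ.trans h) hlim

theorem SchT_eq {β γ : Ordinal} (h : β < γ) : SchT γ β = SchS β := dif_pos h

theorem mem_SchS_of_limit {γ : Ordinal} (hγ : Order.IsSuccLimit γ) {A : Finset ℕ} {n : ℕ}
    (hn : 1 ≤ n) (hA : finLE n A) (hlt : SchA γ n < γ) (hmem : A ∈ SchS (SchA γ n)) :
    A ∈ SchS γ := by
  rw [SchS_limit hγ]
  exact ⟨n, hn, hA, by rwa [SchT_eq hlt]⟩

theorem empty_mem_SchS {γ : Ordinal} (hγ : HG γ) : (∅ : Finset ℕ) ∈ SchS γ := by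
  rcases Ordinal.zero_or_succ_or_isSuccLimit γ with rfl | ⟨δ, rfl⟩ | hlim
  · rw [SchS_zero]; exact Or.inl rfl
  · rw [← Ordinal.add_one_eq_succ, SchS_succ]; exact empty_mem_succStep _
  · obtain ⟨hd1, _, hdlt, _, _, _⟩ := hγ γ le_rfl hlim
    refine mem_SchS_of_limit hlim le_rfl (by intro a ha; simp at ha) (hdlt 1 le_rfl) ?_
    rw [hd1]
    have : (1 : Ordinal) = 0 + 1 := by simp
    rw [this, SchS_succ]
    exact empty_mem_succStep _

theorem singleton_mem_SchS {γ : Ordinal} (hγ : HG γ) {a : ℕ} (ha : 1 ≤ a) :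
    ({a} : Finset ℕ) ∈ SchS γ := by
  induction γ using Ordinal.limitRecOn with
  | zero => rw [SchS_zero]; exact Or.inr ⟨a, rfl⟩
  | add_one δ ih =>
    rw [SchS_succ]
    refine self_mem_succStep (ih (hγ.mono ?_)) ?_
    · exact le_of_lt (lt_add_one δ)
    · intro x hx; simp at hx; omega
  | limit γ hlim ih =>
    obtain ⟨hd1, _, hdlt, _, _, _⟩ := hγ γ le_rfl hlim
    refine mem_SchS_of_limit hlim le_rfl ?_ (hdlt 1 le_rfl) ?_
    · intro x hx; simp at hx; omega
    · rw [hd1]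
      exact ih 1 (hd1 ▸ hdlt 1 le_rfl) (hγ.mono (le_of_lt (hd1 ▸ hdlt 1 le_rfl)))

theorem eq_singleton_one_of_mem (γ : Ordinal) : HG γ → ∀ A : Finset ℕ,
    A ∈ SchS γ → 1 ∈ A → A = {1} := by
  induction γ using Ordinal.limitRecOn with
  | zero =>
    intro _ A hA h1
    rw [SchS_zero] at hA
    rcases hA with rfl | ⟨n, rfl⟩
    · simp at h1
    · simp at h1; rw [h1]
  | add_one δ ih =>
    intro hγ A hA h1
    rw [SchS_succ] at hA
    obtain ⟨n, E, hmem, _, _, hle, rfl⟩ := hA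
    obtain ⟨i, _, hi⟩ := Finset.mem_biUnion.1 h1
    have hn1 : n ≤ 1 := hle i 1 hi
    have hn0 : 0 < n := i.pos
    have hn : n = 1 := by omega
    subst hn
    have hA : Finset.univ.biUnion E = E i := by
      have : (Finset.univ : Finset (Fin 1)) = {i} := by
        ext j; simp [Fin.ext_iff]
      rw [this, Finset.singleton_biUnion]
    rw [hA]
    exact ih (hγ.mono (by exact le_of_lt (lt_add_one δ)))
      (E i) (hmem i) hi
  | limit γ hlim ih =>
    intro hγ A hA h1
    obtain ⟨hd1, _, hdlt, _, _, _⟩ := hγ γ le_rfl hlim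
    rw [SchS_limit hlim] at hA
    obtain ⟨n, hn, hfin, hmem⟩ := hA
    have hn1 : n = 1 := by have := hfin 1 h1; omega
    subst hn1
    rw [SchT_eq (hdlt 1 le_rfl)] at hmem
    have h1lt := hdlt 1 le_rfl
    rw [hd1] at hmem h1lt
    exact ih 1 h1lt (hγ.mono h1lt.le) A hmem h1

theorem filter_mem_SchS (γ : Ordinal) : ∀ A ∈ SchS γ, ∀ N : ℕ,
    (A.filter (fun a => N ≤ a)) ∈ SchS γ := by
  induction γ using Ordinal.limitRecOn with
  | zero =>
    intro A hA N
    rw [SchS_zero] at hA ⊢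
    rcases hA with rfl | ⟨n, rfl⟩
    · exact Or.inl (by simp)
    · rw [Finset.filter_singleton]
      split
      · exact Or.inr ⟨n, rfl⟩
      · exact Or.inl rfl
  | add_one δ ih =>
    intro A hA N
    rw [SchS_succ] at hA ⊢
    obtain ⟨n, E, hmem, hne, hord, hle, rfl⟩ := hA
    have hfb : (Finset.univ.biUnion E).filter (fun a => N ≤ a) =
        Finset.univ.biUnion (fun i => (E i).filter (fun a => N ≤ a)) :=
      Finset.filter_biUnion _ _ _
    rw [hfb]
    by_cases hs : ∃ i : Fin n, ((E i).filter (fun a => N ≤ a)).Nonempty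
    case neg =>
      have : Finset.univ.biUnion (fun i => (E i).filter (fun a => N ≤ a)) = ∅ := by
        push_neg at hs
        ext x
        simp [hs]
      rw [this]; exact empty_mem_succStep _
    case pos =>
      classical
      set s : Finset (Fin n) :=
        Finset.univ.filter (fun i => ((E i).filter (fun a => N ≤ a)).Nonempty) with hsdef
      have hsne : s.Nonempty := by
        obtain ⟨i, hi⟩ := hs
        exact ⟨i, by simp [hsdef, hi]⟩
      set i₀ : Fin n := s.min' hsne with hi0def
      have hi₀mem : ((E i₀).filter (fun a => N ≤ a)).Nonempty :=
        (Finset.mem_filter.1 (s.min'_mem hsne)).2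
      have hmin : ∀ i : Fin n, ((E i).filter (fun a => N ≤ a)).Nonempty → i₀ ≤ i := by
        intro i hi
        exact s.min'_le i (by simp [hsdef, hi])
      refine ⟨n - i₀.val, fun j => (E ⟨i₀.val + j.val, by omega⟩).filter (fun a => N ≤ a),
        fun j => ih _ (hmem _) N, ?_, ?_, ?_, ?_⟩
      · intro j
        dsimp only
        rcases Nat.eq_zero_or_pos j.val with hj | hj
        · have : (⟨i₀.val + j.val, by omega⟩ : Fin n) = i₀ := by
            simp [Fin.ext_iff, hj]
          rw [this]; exact hi₀mem
        · obtain ⟨x, hx⟩ := hi₀mem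
          rw [Finset.mem_filter] at hx
          obtain ⟨y, hy⟩ := hne ⟨i₀.val + j.val, by omega⟩
          have hxy : x < y := hord i₀ _ (by simp [Fin.lt_iff_val_lt_val]; omega) x hx.1 y hy
          exact ⟨y, Finset.mem_filter.2 ⟨hy, by omega⟩⟩
      · intro j j' hjj' a ha b hb
        dsimp only at ha hb
        rw [Finset.mem_filter] at ha hb
        refine hord _ _ ?_ a ha.1 b hb.1
        simp only [Fin.lt_iff_val_lt_val] at hjj' ⊢
        omega
      · intro j a ha
        dsimp only at ha
        rw [Finset.mem_filter] at ha
        have := hle _ a ha.1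
        omega
      · ext x
        simp only [Finset.mem_biUnion, Finset.mem_univ, true_and, Finset.mem_filter]
        constructor
        · rintro ⟨i, hxi, hNx⟩
          have hi : i₀ ≤ i := hmin i ⟨x, Finset.mem_filter.2 ⟨hxi, hNx⟩⟩
          have hival : i₀.val ≤ i.val := hi
          refine ⟨⟨i.val - i₀.val, by omega⟩, ?_⟩
          have : (⟨i₀.val + (i.val - i₀.val), by omega⟩ : Fin n) = i := by
            simp [Fin.ext_iff]; omega
          rw [this]
          exact ⟨hxi, hNx⟩
        · rintro ⟨j, hxj, hNx⟩
          exact ⟨_, hxj, hNx⟩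
  | limit γ hlim ih =>
    intro A hA N
    rw [SchS_limit hlim] at hA ⊢
    obtain ⟨n, hn, hfin, hmem⟩ := hA
    by_cases h : SchA γ n < γ
    · rw [SchT_eq h] at hmem
      refine ⟨n, hn, ?_, ?_⟩
      · intro a ha
        rw [Finset.mem_filter] at ha
        exact hfin a ha.1
      · rw [SchT_eq h]
        exact ih _ h A hmem N
    · rw [SchT, dif_neg h] at hmem
      exact absurd hmem (Set.notMem_empty A)

theorem exists_threshold (δ : Ordinal) : HG δ → ∀ β : Ordinal, β < δ →
    ∃ N : ℕ, 1 ≤ N ∧ ∀ A ∈ SchS β, finLE N A → A ∈ SchS δ := by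
  induction δ using Ordinal.limitRecOn with
  | zero => intro _ β hβ; exact absurd hβ (not_lt_zero')
  | add_one δ₀ ih =>
    intro hγ β hβ
    have hle : β ≤ δ₀ := Order.lt_succ_iff.1 (by rwa [Ordinal.add_one_eq_succ] at hβ)
    have hδ₀le : δ₀ ≤ δ₀ + 1 := le_of_lt (lt_add_one δ₀)
    rcases lt_or_eq_of_le hle with hlt | rfl
    · obtain ⟨N, hN1, hN⟩ := ih (hγ.mono hδ₀le) β hlt
      refine ⟨N, hN1, fun A hA hfin => ?_⟩
      rw [SchS_succ]
      exact self_mem_succStep (hN A hA hfin) (fun a ha => le_trans hN1 (hfin a ha))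
    · refine ⟨1, le_rfl, fun A hA hfin => ?_⟩
      rw [SchS_succ]
      exact self_mem_succStep hA hfin
  | limit γ hlim ih =>
    intro hγ β hβ
    obtain ⟨hd1, _, hdlt, _, hcof, _⟩ := hγ γ le_rfl hlim
    obtain ⟨m, hm1, hβm⟩ := hcof β hβ
    obtain ⟨N, hN1, hN⟩ := ih (SchA γ m) (hdlt m hm1) (hγ.mono (le_of_lt (hdlt m hm1))) β hβm
    refine ⟨max N m, le_trans hN1 (le_max_left N m), fun A hA hfin => ?_⟩
    refine mem_SchS_of_limit hlim hm1 ?_ (hdlt m hm1) ?_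
    · intro a ha; exact le_trans (le_max_right N m) (hfin a ha)
    · exact hN A hA (fun a ha => le_trans (le_max_left N m) (hfin a ha))

theorem SchS_add_nat_succ (θ : Ordinal) (k : ℕ) :
    SchS (θ + (k + 1 : ℕ)) = succStep (SchS (θ + k)) := by
  have : (θ + (k + 1 : ℕ)) = (θ + k) + 1 := by
    push_cast
    rw [add_assoc]
  rw [this, SchS_succ]

theorem bump_SchS {θ : Ordinal} {A : Finset ℕ} (h1 : finLE 1 A) :
    ∀ K k : ℕ, k ≤ K → A ∈ SchS (θ + k) → A ∈ SchS (θ + K) := by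
  intro K
  induction K with
  | zero =>
    intro k hk hA
    obtain rfl := Nat.le_zero.1 hk
    exact hA
  | succ K ih =>
    intro k hk hA
    rcases Nat.lt_or_ge k (K + 1) with hlt | hge
    · rw [SchS_add_nat_succ]
      exact self_mem_succStep (ih k (by omega) hA) h1
    · have : k = K + 1 := by omega
      exact this ▸ hA

theorem HG_add_nat {θ : Ordinal} (hθ : HG θ) (k : ℕ) : HG (θ + k) := by
  induction k with
  | zero => simpa using hθ
  | succ k ih =>
    intro β hβ hβlim
    have harith : (θ + (k + 1 : ℕ)) = (θ + k) + 1 := by push_cast; rw [add_assoc]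
    rw [harith] at hβ
    rcases lt_or_eq_of_le hβ with hlt | rfl
    · exact ih β (Order.lt_succ_iff.1 (by rwa [Ordinal.add_one_eq_succ] at hlt)) hβlim
    · exfalso
      have h1 : θ + (k:ℕ) < θ + (k:ℕ) + 1 := lt_add_one _
      have := hβlim.succ_lt h1
      rw [Ordinal.add_one_eq_succ] at this
      exact absurd this (lt_irrefl _)

theorem build_SchS (θ : Ordinal) (hθ : HG θ) : ∀ (r : ℕ) (A G : Finset ℕ),
    G ∈ SchS θ → G ⊆ A → (∀ a ∈ A, 2 ≤ a) → (∀ a ∈ A \ G, ∀ g ∈ G, a < g) →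
    (A \ G).card = r → A ∈ SchS (θ + r) := by
  intro r
  induction r with
  | zero =>
    intro A G hG hGA _ _ hcard
    have : A = G := Finset.Subset.antisymm
      (Finset.sdiff_eq_empty_iff_subset.1 (Finset.card_eq_zero.1 hcard)) hGA
    simpa [this] using hG
  | succ r ih =>
    intro A G hG hGA h2 hsep hcard
    have hDne : (A \ G).Nonempty := Finset.card_pos.1 (by omega)
    set a := (A \ G).min' hDne with hadef
    have haD : a ∈ A \ G := Finset.min'_mem _ hDne
    have haA : a ∈ A := (Finset.mem_sdiff.1 haD).1
    have haG : a ∉ G := (Finset.mem_sdiff.1 haD).2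
    have ha2 : 2 ≤ a := h2 a haA
    set A' := A.erase a with hA'def
    have hsub : A' ⊆ A := Finset.erase_subset a A
    have hdiff : A' \ G = (A \ G).erase a := by
      ext x
      simp only [hA'def, Finset.mem_sdiff, Finset.mem_erase]
      tauto
    have hA' : A' ∈ SchS (θ + r) := by
      refine ih A' G hG ?_ (fun x hx => h2 x (hsub hx)) ?_ ?_
      · intro x hx
        exact Finset.mem_erase.2 ⟨fun he => haG (he ▸ hx), hGA hx⟩
      · intro x hx g hg
        have hx' : x ∈ A \ G := by
          have := Finset.mem_sdiff.1 hx
          exact Finset.mem_sdiff.2 ⟨hsub this.1, this.2⟩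
        exact hsep x hx' g hg
      · rw [hdiff, Finset.card_erase_of_mem haD, hcard]
        omega
    have hsing : ({a} : Finset ℕ) ∈ SchS (θ + r) := by
      refine bump_SchS ?_ r 0 (Nat.zero_le r) ?_
      · intro x hx; simp at hx; omega
      · simpa using singleton_mem_SchS hθ (by omega)
    rcases A'.eq_empty_or_nonempty with hA'e | hA'ne
    · have hAa : A = {a} := by
        rcases (Finset.erase_eq_empty_iff A a).1 hA'e with h | h
        · exact absurd (h ▸ haA) (by simp)
        · exact h
      rw [hAa]
      refine bump_SchS ?_ (r+1) 0 (Nat.zero_le _) ?_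
      · intro x hx; simp at hx; omega
      · simpa using singleton_mem_SchS hθ (by omega)
    · have hlt : finLT {a} A' := by
        intro x hx b hb
        simp at hx
        subst hx
        have hbA : b ∈ A := hsub hb
        have hba : b ≠ a := (Finset.mem_erase.1 hb).1
        by_cases hbG : b ∈ G
        · exact hsep a haD b hbG
        · have hbD : b ∈ A \ G := Finset.mem_sdiff.2 ⟨hbA, hbG⟩
          have := Finset.min'_le _ b hbD
          omega
      have hpair : {a} ∪ A' ∈ succStep (SchS (θ + r)) := by
        refine pair_mem_succStep hsing hA' (by simp) hA'ne ?_ ?_ hlt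
        · intro x hx; simp at hx; omega
        · intro x hx; exact h2 x (hsub hx)
      have hins : {a} ∪ A' = A := by
        ext x
        simp only [Finset.mem_union, Finset.mem_singleton, hA'def, Finset.mem_erase]
        constructor
        · rintro (rfl | ⟨_, h⟩) <;> first | exact haA | exact h
        · intro hx
          by_cases hxa : x = a
          · exact Or.inl hxa
          · exact Or.inr ⟨hxa, hx⟩
      rw [← SchS_add_nat_succ, hins] at hpair
      exact hpair

theorem absorb_SchS (θ : Ordinal) : HG θ → ∀ β : Ordinal, β ≤ θ →
    ∃ N : ℕ, ∀ A ∈ SchS β, finLE 1 A → A ∈ SchS (θ + N) := by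
  induction θ using Ordinal.limitRecOn with
  | zero =>
    intro _ β hβ
    obtain rfl := nonpos_iff_eq_zero.1 hβ
    exact ⟨0, fun A hA _ => by simpa using hA⟩
  | add_one θ₀ ih =>
    intro hθ β hβ
    rcases lt_or_eq_of_le hβ with hlt | rfl
    · obtain ⟨N, hN⟩ := ih (hθ.mono (le_of_lt (lt_add_one θ₀))) β
        (Order.lt_succ_iff.1 (by rwa [Ordinal.add_one_eq_succ] at hlt))
      refine ⟨N + 1, fun A hA h1 => ?_⟩
      have e : θ₀ + 1 + ((N + 1 : ℕ) : Ordinal) = θ₀ + ((N + 2 : ℕ) : Ordinal) := by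
        rw [add_assoc]
        congr 1
        norm_cast
        omega
      rw [e]
      exact bump_SchS h1 (N + 2) N (by omega) (hN A hA h1)
    · exact ⟨0, fun A hA _ => by simpa using hA⟩
  | limit θ hlim ih =>
    intro hθ β hβ
    rcases lt_or_eq_of_le hβ with hlt | rfl
    · obtain ⟨N₁, hN₁1, hN₁⟩ := exists_threshold θ hθ β hlt
      refine ⟨N₁, fun A hA h1 => ?_⟩
      have hHG : HG (θ + (N₁ : ℕ)) := HG_add_nat hθ N₁
      by_cases hA0 : A = ∅
      · subst hA0; exact empty_mem_SchS hHG
      by_cases h1A : 1 ∈ A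
      · rw [eq_singleton_one_of_mem β (hθ.mono hlt.le) A hA h1A]
        exact singleton_mem_SchS hHG le_rfl
      · have h2 : ∀ a ∈ A, 2 ≤ a := by
          intro a ha
          have := h1 a ha
          rcases Nat.lt_or_ge a 2 with h | h
          · interval_cases a
            · exact absurd ha h1A
          · exact h
        set G := A.filter (fun a => N₁ ≤ a) with hGdef
        have hGβ : G ∈ SchS β := filter_mem_SchS β A hA N₁
        have hGθ : G ∈ SchS θ := hN₁ G hGβ (fun a ha => (Finset.mem_filter.1 ha).2)
        have hsep : ∀ a ∈ A \ G, ∀ g ∈ G, a < g := by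
          intro a ha g hg
          have hag : ¬ N₁ ≤ a := by
            have := Finset.mem_sdiff.1 ha
            intro hc
            exact this.2 (Finset.mem_filter.2 ⟨this.1, hc⟩)
          have := (Finset.mem_filter.1 hg).2
          omega
        have hbuild : A ∈ SchS (θ + ((A \ G).card : ℕ)) :=
          build_SchS θ hθ _ A G hGθ (Finset.filter_subset _ A) h2 hsep rfl
        have hcard : (A \ G).card ≤ N₁ := by
          have hsub : A \ G ⊆ Finset.range N₁ := by
            intro x hx
            have h := Finset.mem_sdiff.1 hx
            have : ¬ N₁ ≤ x := fun hc => h.2 (Finset.mem_filter.2 ⟨h.1, hc⟩)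
            simp
            omega
          simpa using Finset.card_le_card hsub
        exact bump_SchS h1 N₁ _ hcard hbuild
    · exact ⟨0, fun A hA _ => by simpa using hA⟩

theorem limit_add_nat_lt {γ θ : Ordinal} (hlim : Order.IsSuccLimit γ) (hθ : θ < γ) (k : ℕ) :
    θ + (k : ℕ) < γ := by
  induction k with
  | zero => simpa using hθ
  | succ k ih =>
    have : θ + ((k + 1 : ℕ) : Ordinal) = (θ + k) + 1 := by push_cast; rw [add_assoc]
    rw [this, Ordinal.add_one_eq_succ]
    exact hlim.succ_lt ih

theorem step_exists {γ : Ordinal} (hlim : Order.IsSuccLimit γ) (hHG' : ∀ θ : Ordinal, θ < γ → HG θ)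
    (η ρ : Ordinal) (hη : η < γ) (hρ : ρ < γ) :
    ∃ ρ' : Ordinal, (∃ σ : Ordinal, ρ' = σ + 1) ∧ ρ < ρ' ∧ η < ρ' ∧ ρ' < γ ∧
      ∀ A ∈ SchS (ρ + 1), finLE 1 A → A ∈ SchS ρ' := by
  set θ := max (ρ + 1) (η + 1) with hθdef
  have hθγ : θ < γ := by
    apply max_lt
    · rw [Ordinal.add_one_eq_succ]; exact hlim.succ_lt hρ
    · rw [Ordinal.add_one_eq_succ]; exact hlim.succ_lt hη
  obtain ⟨N, hN⟩ := absorb_SchS θ (hHG' θ hθγ) (ρ + 1) (le_max_left _ _)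
  refine ⟨θ + ((N + 1 : ℕ) : Ordinal), ⟨θ + N, by push_cast; rw [add_assoc]⟩, ?_, ?_, ?_, ?_⟩
  · calc ρ < ρ + 1 := lt_add_one ρ
      _ ≤ θ := le_max_left _ _
      _ ≤ θ + ((N + 1 : ℕ) : Ordinal) := le_self_add
  · calc η < η + 1 := lt_add_one η
      _ ≤ θ := le_max_right _ _
      _ ≤ θ + ((N + 1 : ℕ) : Ordinal) := le_self_add
  · exact limit_add_nat_lt hlim hθγ (N + 1)
  · intro A hA h1
    exact bump_SchS h1 (N + 1) N (by omega) (hN A hA h1)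

theorem goodseq_exists : ∀ γ : Ordinal, γ < omegaOne → Order.IsSuccLimit γ →
    ∃ d : ℕ → Ordinal, GoodSeq γ (SchT γ) d := by
  intro γ
  induction γ using Ordinal.induction with
  | h γ IH =>
    intro hγω hlim
    have hHG' : ∀ θ : Ordinal, θ < γ → HG θ := by
      intro θ hθ β hβ hβlim
      have hβγ : β < γ := lt_of_le_of_lt hβ hθ
      have hex : ∃ d, GoodSeq β (SchT β) d := IH β hβγ (hβγ.trans hγω) hβlim
      have := Classical.epsilon_spec hex
      rwa [SchA, if_pos hβlim]
    -- countable surjection onto Iio γ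
    have hcard : γ.card < Cardinal.aleph 1 := Cardinal.lt_ord.1 hγω
    have hcount : (Set.Iio γ).Countable := by
      rw [Cardinal.countable_iff_lt_aleph_one, Ordinal.mk_Iio_ordinal]
      rwa [Cardinal.lift_lt_aleph_one]
    obtain ⟨g, hgrange⟩ := hcount.exists_eq_range ⟨0, hlim.pos⟩
    have hg1 : ∀ n : ℕ, g n < γ := by
      intro n
      have : g n ∈ Set.Iio γ := hgrange ▸ Set.mem_range_self n
      exact this
    have hg2 : ∀ β : Ordinal, β < γ → ∃ n : ℕ, g n = β := by
      intro β hβ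
      have : β ∈ Set.range g := hgrange ▸ hβ
      obtain ⟨n, hn⟩ := this
      exact ⟨n, hn⟩
    have hstep : ∀ (j : ℕ) (ρ : Ordinal), ρ < γ →
        ∃ ρ' : Ordinal, (∃ σ : Ordinal, ρ' = σ + 1) ∧ ρ < ρ' ∧ max (g j) (g 0) < ρ' ∧
          ρ' < γ ∧ ∀ A ∈ SchS (ρ + 1), finLE 1 A → A ∈ SchS ρ' :=
      fun j ρ hρ => step_exists hlim hHG' (max (g j) (g 0)) ρ
        (max_lt (hg1 j) (hg1 0)) hρ
    choose step hsucc hmono hgstep hstepγ hchain using hstep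
    set f : ℕ → Ordinal → Ordinal :=
      fun j ρ => if h : ρ < γ then step j ρ h else 1 with hfdef
    set d : ℕ → Ordinal :=
      fun n => Nat.rec (1 : Ordinal) (fun j ρ => if j = 0 then 1 else f j ρ) n with hddef
    have hdstep : ∀ j : ℕ, d (j + 1) = if j = 0 then 1 else f j (d j) := fun j => rfl
    have hd1 : d 1 = 1 := by have := hdstep 0; simpa using this
    have hQ : ∀ j : ℕ, 1 ≤ j → d j < γ ∧ ∃ σ : Ordinal, d j = σ + 1 := by
      intro j
      induction j with
      | zero => omega
      | succ j ihj =>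
        intro _
        rcases Nat.eq_zero_or_pos j with rfl | hj
        · rw [hdstep 0, if_pos rfl]
          exact ⟨Ordinal.one_lt_of_isSuccLimit hlim, 0, (zero_add 1).symm⟩
        · have h := (ihj hj).1
          rw [hdstep j, if_neg (by omega), hfdef]
          simp only [dif_pos h]
          exact ⟨hstepγ j (d j) h, hsucc j (d j) h⟩
    have hdsucc_eq : ∀ j : ℕ, 1 ≤ j → ∀ h : d j < γ, d (j + 1) = step j (d j) h := by
      intro j hj h
      rw [hdstep j, if_neg (by omega), hfdef]
      simp only [dif_pos h]
    refine ⟨d, hd1, fun j hj => (hQ j hj).2, fun j hj => (hQ j hj).1, ?_, ?_, ?_⟩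
    · intro j hj
      rw [hdsucc_eq j hj (hQ j hj).1]
      exact hmono j (d j) _
    · intro β hβ
      obtain ⟨n, hn⟩ := hg2 β hβ
      rcases Nat.eq_zero_or_pos n with rfl | hn1
      · refine ⟨2, by omega, ?_⟩
        show β < d (1 + 1)
        rw [hdsucc_eq 1 le_rfl (hQ 1 le_rfl).1]
        calc β = g 0 := hn.symm
          _ ≤ max (g 1) (g 0) := le_max_right _ _
          _ < step 1 (d 1) _ := hgstep 1 (d 1) _
      · refine ⟨n + 1, by omega, ?_⟩
        rw [hdsucc_eq n hn1 (hQ n hn1).1]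
        calc β = g n := hn.symm
          _ ≤ max (g n) (g 0) := le_max_left _ _
          _ < step n (d n) _ := hgstep n (d n) _
    · intro j hj A hA h1
      have hdj : d j < γ := (hQ j hj).1
      have hdj1 : d j + 1 < γ := by
        rw [Ordinal.add_one_eq_succ]; exact hlim.succ_lt hdj
      have hdj'γ : d (j + 1) < γ := (hQ (j + 1) (by omega)).1
      rw [SchT_eq hdj1] at hA
      rw [SchT_eq hdj'γ, hdsucc_eq j hj hdj]
      exact hchain j (d j) hdj A hA h1


theorem exists_good_approximating_sequences (ξ : Ordinal) (hξ : ξ < omegaOne) :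
    ∃ P : PartialSchreier ξ, ∀ γ : Ordinal, Order.IsSuccLimit γ → γ ≤ ξ →
      P.α γ 1 = 1 ∧
      ∀ n : ℕ, 1 ≤ n → ∀ A B : Finset ℕ,
        A ∈ P.S (P.α γ n) → B ∈ P.S (P.α γ n) → finLE 2 A → finLT A B →
          A ∪ B ∈ P.S (P.α γ (n + 1)) := by
  have HGξ : HG ξ := by
    intro β hβ hβlim
    have hβω : β < omegaOne := lt_of_le_of_lt hβ hξ
    have hex := goodseq_exists β hβω hβlim
    have := Classical.epsilon_spec hex
    rwa [SchA, if_pos hβlim]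
  refine ⟨⟨SchA, SchS, ?_, ?_, ?_, ?_, ?_, ?_, ?_, ?_⟩, ?_⟩
  · rw [SchS_zero]; rfl
  · exact fun γ _ => SchS_succ γ
  · intro γ hγ hγξ
    obtain ⟨_, _, hdlt, _, _, _⟩ := HGξ γ hγξ hγ
    rw [SchS_limit hγ]
    ext E
    simp only [Set.mem_setOf_eq]
    constructor
    · rintro ⟨n, hn, hf, hm⟩
      exact ⟨n, hn, hf, by rwa [SchT_eq (hdlt n hn)] at hm⟩
    · rintro ⟨n, hn, hf, hm⟩
      exact ⟨n, hn, hf, by rwa [SchT_eq (hdlt n hn)]⟩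
  · intro γ hγ hγξ n hn
    obtain ⟨_, hsuccOrd, _, _, _, _⟩ := HGξ γ hγξ hγ
    obtain ⟨σ, hσ⟩ := hsuccOrd n hn
    rw [hσ]
    calc (1 : Ordinal) = 0 + 1 := (zero_add 1).symm
      _ ≤ σ + 1 := add_le_add_left (zero_le : (0 : Ordinal) ≤ σ) 1
  · intro γ hγ hγξ n hn
    obtain ⟨_, _, hdlt, _, _, _⟩ := HGξ γ hγξ hγ
    exact hdlt n hn
  · intro γ hγ hγξ n hn
    obtain ⟨_, hsuccOrd, _, _, _, _⟩ := HGξ γ hγξ hγ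
    exact hsuccOrd n hn
  · intro γ hγ hγξ n hn
    obtain ⟨_, _, _, hmono, _, _⟩ := HGξ γ hγξ hγ
    exact hmono n hn
  · intro γ hγ hγξ β hβ
    obtain ⟨_, _, _, _, hcof, _⟩ := HGξ γ hγξ hγ
    exact hcof β hβ
  · intro γ hγ hγξ
    show SchA γ 1 = 1 ∧ ∀ n : ℕ, 1 ≤ n → ∀ A B : Finset ℕ,
      A ∈ SchS (SchA γ n) → B ∈ SchS (SchA γ n) → finLE 2 A → finLT A B →
        A ∪ B ∈ SchS (SchA γ (n + 1))
    obtain ⟨hd1, hsuccOrd, hdlt, hmono, hcof, hchain⟩ := HGξ γ hγξ hγ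
    refine ⟨hd1, ?_⟩
    intro n hn A B hA hB h2A hAB
    have hnlt : SchA γ n < γ := hdlt n hn
    have hn1lt : SchA γ n + 1 < γ := by
      rw [Ordinal.add_one_eq_succ]; exact hγ.succ_lt hnlt
    have hn'lt : SchA γ (n + 1) < γ := hdlt (n + 1) (by omega)
    have hchainS : ∀ X ∈ SchS (SchA γ n + 1), finLE 1 X → X ∈ SchS (SchA γ (n + 1)) := by
      intro X hX h1
      have := hchain n hn X (by rwa [SchT_eq hn1lt]) h1
      rwa [SchT_eq hn'lt] at this
    obtain ⟨σ, hσ⟩ := hsuccOrd n hn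
    have hmin1 : ∀ X ∈ SchS (SchA γ n), X.Nonempty → finLE 1 X := by
      intro X hX _
      rw [hσ, SchS_succ] at hX
      exact min1_of_mem_succStep hX
    rcases A.eq_empty_or_nonempty with rfl | hAne
    · rw [Finset.empty_union]
      rcases B.eq_empty_or_nonempty with rfl | hBne
      · obtain ⟨τ, hτ⟩ := hsuccOrd (n + 1) (by omega)
        rw [hτ, SchS_succ]
        exact empty_mem_succStep _
      · have h1B := hmin1 B hB hBne
        refine hchainS B ?_ h1B
        rw [SchS_succ]
        exact self_mem_succStep hB h1B
    · have h1A : finLE 1 A := fun a ha => le_trans (by omega) (h2A a ha)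
      rcases B.eq_empty_or_nonempty with rfl | hBne
      · rw [Finset.union_empty]
        refine hchainS A ?_ h1A
        rw [SchS_succ]
        exact self_mem_succStep hA h1A
      · have h2B : finLE 2 B := by
          intro b hb
          obtain ⟨a, ha⟩ := hAne
          have := h2A a ha
          have := hAB a ha b hb
          omega
        have hpair : A ∪ B ∈ SchS (SchA γ n + 1) := by
          rw [SchS_succ]
          exact pair_mem_succStep hA hB hAne hBne h2A h2B hAB
        refine hchainS _ hpair ?_
        intro x hx
        rcases Finset.mem_union.1 hx with h | h
        · exact le_trans (by omega) (h2A x h)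
        · exact le_trans (by omega) (h2B x h)
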